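/- Let G be a Garside group of finite type and x ∈ G with ℓ(x) > 1. Then: (1) if φ(x)ι(x) ⋠ Δ, then 𝔰(x) = d(c(x)); (2) if Δ ⋠ φ(x)ι(x), then 𝔰(x) = c(d(x)). -/

import Mathlib

namespace GarsidePaper

/-- A Garside structure of finite type on a group `G`: a positive submonoid `P` with
`P ∩ P⁻¹ = {1}`, a Garside element `Δ ∈ P`, the prefix order `a ≼ b ↔ a⁻¹b ∈ P`
a lattice order (with meet `wedge` and join `vee`), the simple elements `[1,Δ]`
generating `G` and being finite, `Δ⁻¹PΔ = P`, a finite norm on positive elements,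
and the infimum and supremum functions `inf`, `sup` characterised by
`Δ^(inf x) ≼ x ≼ Δ^(sup x)` with `inf x` maximal and `sup x` minimal. -/
structure Garside (G : Type*) [Group G] where
  P : Submonoid G
  Δ : G
  purity : ∀ a : G, a ∈ P → a⁻¹ ∈ P → a = 1
  delta_mem : Δ ∈ P
  wedge : G → G → G
  vee : G → G → G
  wedge_le_left : ∀ a b : G, (wedge a b)⁻¹ * a ∈ P
  wedge_le_right : ∀ a b : G, (wedge a b)⁻¹ * b ∈ P
  le_wedge : ∀ a b c : G, c⁻¹ * a ∈ P → c⁻¹ * b ∈ P → c⁻¹ * wedge a b ∈ P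
  le_vee_left : ∀ a b : G, a⁻¹ * vee a b ∈ P
  le_vee_right : ∀ a b : G, b⁻¹ * vee a b ∈ P
  vee_le : ∀ a b c : G, a⁻¹ * c ∈ P → b⁻¹ * c ∈ P → (vee a b)⁻¹ * c ∈ P
  simples_generate : Subgroup.closure {a : G | a ∈ P ∧ a⁻¹ * Δ ∈ P} = (⊤ : Subgroup G)
  conj_pos : ∀ a : G, a ∈ P → Δ⁻¹ * a * Δ ∈ P
  norm : G → ℕ
  norm_exists : ∀ x : G, x ∈ P → x ≠ 1 →
    ∃ l : List G, (∀ s ∈ l, s ∈ P ∧ s ≠ 1) ∧ l.prod = x ∧ l.length = norm x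
  norm_max : ∀ x : G, x ∈ P → x ≠ 1 →
    ∀ l : List G, (∀ s ∈ l, s ∈ P ∧ s ≠ 1) → l.prod = x → l.length ≤ norm x
  simples_finite : Set.Finite {a : G | a ∈ P ∧ a⁻¹ * Δ ∈ P}
  inf : G → ℤ
  sup : G → ℤ
  inf_le : ∀ x : G, (Δ ^ inf x)⁻¹ * x ∈ P
  inf_max : ∀ (x : G) (p : ℤ), (Δ ^ p)⁻¹ * x ∈ P → p ≤ inf x
  le_sup : ∀ x : G, x⁻¹ * Δ ^ sup x ∈ P
  sup_min : ∀ (x : G) (q : ℤ), x⁻¹ * Δ ^ q ∈ P → sup x ≤ q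

namespace Garside

variable {G : Type*} [Group G]

/-- The prefix order `a ≼ b`. -/
def le (S : Garside G) (a b : G) : Prop := a⁻¹ * b ∈ S.P

/-- The canonical length `ℓ(x) = sup(x) - inf(x)`. -/
def len (S : Garside G) (x : G) : ℤ := S.sup x - S.inf x

/-- The initial factor `ι(x) = (x Δ^(-inf x)) ∧ Δ`. -/
def iota (S : Garside G) (x : G) : G := S.wedge (x * S.Δ ^ (-S.inf x)) S.Δ

/-- The preferred prefix `𝔭(x) = ι(x) ∧ ι(x⁻¹)`. -/
def pp (S : Garside G) (x : G) : G := S.wedge (S.iota x) (S.iota x⁻¹)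

/-- Cyclic sliding `𝔰(x) = 𝔭(x)⁻¹ x 𝔭(x)`. -/
def sl (S : Garside G) (x : G) : G := (S.pp x)⁻¹ * x * S.pp x

/-- The final factor `φ(x) = (Δ^(sup x - 1) ∧ x)⁻¹ x`. -/
def phi (S : Garside G) (x : G) : G := (S.wedge (S.Δ ^ (S.sup x - 1)) x)⁻¹ * x

/-- Conjugation by `Δ`: `τ(x) = Δ⁻¹ x Δ`. -/
def tau (S : Garside G) (x : G) : G := S.Δ⁻¹ * x * S.Δ

/-- Cycling `c(x) = ι(x)⁻¹ x ι(x)`. -/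
def cyc (S : Garside G) (x : G) : G := (S.iota x)⁻¹ * x * S.iota x

/-- Decycling `d(x) = φ(x) x φ(x)⁻¹`. -/
def dec (S : Garside G) (x : G) : G := S.phi x * x * (S.phi x)⁻¹

/-- The transport `α^{(1)} = 𝔭(x)⁻¹ α 𝔭(x^α)` of `α` at `x`. -/
def transport (S : Garside G) (x α : G) : G := (S.pp x)⁻¹ * α * S.pp (α⁻¹ * x * α)

/-- The iterated transport: `itTransport x i α = α^{(i)}`, the transport of `α^{(i-1)}`
at `𝔰^{i-1}(x)`, with `α^{(0)} = α`. -/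
def itTransport (S : Garside G) (x : G) : ℕ → G → G
  | 0, α => α
  | i + 1, α => S.transport ((S.sl)^[i] x) (S.itTransport x i α)

/-- `𝔓_i(x) = 𝔭(x) 𝔭(𝔰(x)) ⋯ 𝔭(𝔰^{i-1}(x))`, with `𝔓₀(x) = 1`. -/
def PP (S : Garside G) (x : G) : ℕ → G
  | 0 => 1
  | i + 1 => S.PP x i * S.pp ((S.sl)^[i] x)

/-- The summit set `SS(x)`. -/
def SS (S : Garside G) (x : G) : Set G :=
  {y | IsConj x y ∧ ∀ z : G, IsConj x z → S.inf z ≤ S.inf y}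

/-- The super summit set `SSS(x)`. -/
def SSS (S : Garside G) (x : G) : Set G :=
  {y | IsConj x y ∧ (∀ z : G, IsConj x z → S.inf z ≤ S.inf y) ∧
       (∀ z : G, IsConj x z → S.sup y ≤ S.sup z)}

/-- The ultra summit set `USS(x)`. -/
def USS (S : Garside G) (x : G) : Set G :=
  {y | y ∈ S.SSS x ∧ ∃ m : ℕ, 1 ≤ m ∧ (S.cyc)^[m] y = y}

/-- The reduced super summit set `RSSS(x)`. -/
def RSSS (S : Garside G) (x : G) : Set G :=
  {y | IsConj x y ∧ (∃ m : ℕ, 1 ≤ m ∧ (S.cyc)^[m] y = y) ∧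
       (∃ n : ℕ, 1 ≤ n ∧ (S.dec)^[n] y = y)}

/-- The set of sliding circuits `SC(x)`. -/
def SC (S : Garside G) (x : G) : Set G :=
  {y | IsConj x y ∧ ∃ m : ℕ, 1 ≤ m ∧ (S.sl)^[m] y = y}

end Garside
namespace Garside

variable {G : Type*} [Group G] (S : Garside G)

lemma le_rfl' (a : G) : S.le a a := by simp [le, S.P.one_mem]

lemma le_trans' {a b c : G} (h1 : S.le a b) (h2 : S.le b c) : S.le a c := by
  have := S.P.mul_mem h1 h2
  simpa [le, mul_assoc] using this

lemma le_antisymm' {a b : G} (h1 : S.le a b) (h2 : S.le b a) : a = b := by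
  have h3 : a⁻¹ * b = 1 := S.purity _ h1 (by have h2' : b⁻¹ * a ∈ S.P := h2; simpa [mul_inv_rev] using h2')
  have := inv_mul_eq_one.mp h3
  exact this

/-- The set of simple elements. -/
def SD : Set G := {a : G | a ∈ S.P ∧ a⁻¹ * S.Δ ∈ S.P}

lemma delta_mem_SD : S.Δ ∈ S.SD := ⟨S.delta_mem, by simp [S.P.one_mem]⟩

lemma tau_mem_SD {a : G} (h : a ∈ S.SD) : S.Δ⁻¹ * a * S.Δ ∈ S.SD := by
  refine ⟨S.conj_pos a h.1, ?_⟩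
  have h2 := S.conj_pos _ h.2
  have e : S.Δ⁻¹ * (a⁻¹ * S.Δ) * S.Δ = (S.Δ⁻¹ * a * S.Δ)⁻¹ * S.Δ := by group
  rwa [e] at h2

lemma tau_inv_mem_SD {a : G} (h : a ∈ S.SD) : S.Δ * a * S.Δ⁻¹ ∈ S.SD := by
  have hmaps : Set.MapsTo (fun g => S.Δ⁻¹ * g * S.Δ) S.SD S.SD := fun g hg => S.tau_mem_SD hg
  have hinj : Set.InjOn (fun g => S.Δ⁻¹ * g * S.Δ) S.SD := by
    intro g _ g' _ hgg
    simpa using mul_left_cancel (mul_right_cancel hgg)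
  have hbij := (Set.Finite.injOn_iff_bijOn_of_mapsTo S.simples_finite hmaps).mp hinj
  obtain ⟨b, hb, hba⟩ := hbij.surjOn h
  have : b = S.Δ * a * S.Δ⁻¹ := by
    rw [← hba]; group
  rwa [this] at hb

/-- The monoid generated by simple elements. -/
def Msub : Submonoid G := Submonoid.closure S.SD

lemma M_le_P {a : G} (h : a ∈ S.Msub) : a ∈ S.P :=
  Submonoid.closure_le.mpr (fun _ hy => hy.1) h

lemma tau_mem_M {a : G} (h : a ∈ S.Msub) : S.Δ⁻¹ * a * S.Δ ∈ S.Msub := by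
  induction h using Submonoid.closure_induction with
  | mem g hg => exact Submonoid.subset_closure (S.tau_mem_SD hg)
  | one => simpa using S.Msub.one_mem
  | mul g g' _ _ hg hg' =>
      have e : (S.Δ⁻¹ * g * S.Δ) * (S.Δ⁻¹ * g' * S.Δ) = S.Δ⁻¹ * (g * g') * S.Δ := by group
      rw [← e]; exact S.Msub.mul_mem hg hg'

lemma tau_inv_mem_M {a : G} (h : a ∈ S.Msub) : S.Δ * a * S.Δ⁻¹ ∈ S.Msub := by
  induction h using Submonoid.closure_induction with
  | mem g hg => exact Submonoid.subset_closure (S.tau_inv_mem_SD hg)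
  | one => simpa using S.Msub.one_mem
  | mul g g' _ _ hg hg' =>
      have e : (S.Δ * g * S.Δ⁻¹) * (S.Δ * g' * S.Δ⁻¹) = S.Δ * (g * g') * S.Δ⁻¹ := by group
      rw [← e]; exact S.Msub.mul_mem hg hg'

lemma tau_pow_mem_M (n : ℕ) {a : G} (h : a ∈ S.Msub) :
    (S.Δ ^ n)⁻¹ * a * S.Δ ^ n ∈ S.Msub := by
  induction n with
  | zero => simpa using h
  | succ n ih =>
      have e : S.Δ⁻¹ * ((S.Δ ^ n)⁻¹ * a * S.Δ ^ n) * S.Δ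
          = (S.Δ ^ (n+1))⁻¹ * a * S.Δ ^ (n+1) := by
        rw [pow_succ]; group
      rw [← e]; exact S.tau_mem_M ih

lemma tau_inv_pow_mem_M (n : ℕ) {a : G} (h : a ∈ S.Msub) :
    S.Δ ^ n * a * (S.Δ ^ n)⁻¹ ∈ S.Msub := by
  induction n with
  | zero => simpa using h
  | succ n ih =>
      have e : S.Δ * (S.Δ ^ n * a * (S.Δ ^ n)⁻¹) * S.Δ⁻¹
          = S.Δ ^ (n+1) * a * (S.Δ ^ (n+1))⁻¹ := by
        rw [pow_succ']; group
      rw [← e]; exact S.tau_inv_mem_M ih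

lemma M_inv {m : G} (h : m ∈ S.Msub) : ∃ n : ℕ, S.Δ ^ n * m⁻¹ ∈ S.Msub := by
  induction h using Submonoid.closure_induction with
  | mem g hg =>
      refine ⟨1, ?_⟩
      have h1 : g⁻¹ * S.Δ ∈ S.SD := by
        refine ⟨hg.2, ?_⟩
        have := S.conj_pos g hg.1
        have e : S.Δ⁻¹ * g * S.Δ = (g⁻¹ * S.Δ)⁻¹ * S.Δ := by group
        rwa [e] at this
      have h2 := S.tau_inv_mem_SD h1
      have e2 : S.Δ * (g⁻¹ * S.Δ) * S.Δ⁻¹ = S.Δ ^ 1 * g⁻¹ := by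
        rw [pow_one]; group
      rw [← e2]; exact Submonoid.subset_closure h2
  | one => exact ⟨0, by simpa using S.Msub.one_mem⟩
  | mul g g' _ _ hg hg' =>
      obtain ⟨n, hn⟩ := hg
      obtain ⟨n', hn'⟩ := hg'
      refine ⟨n + n', ?_⟩
      have e : S.Δ ^ (n + n') * (g * g')⁻¹
          = (S.Δ ^ n * (S.Δ ^ n' * g'⁻¹) * (S.Δ ^ n)⁻¹) * (S.Δ ^ n * g⁻¹) := by
        rw [pow_add]; group
      rw [e]
      exact S.Msub.mul_mem (S.tau_inv_pow_mem_M n hn') hn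

/-- Claim E: quotient of a product of simples by a simple prefix stays in the monoid. -/
lemma simple_div : ∀ (l : List G), (∀ y ∈ l, y ∈ S.SD) → ∀ t ∈ S.SD,
    t⁻¹ * l.prod ∈ S.P → t⁻¹ * l.prod ∈ S.Msub := by
  intro l
  induction l with
  | nil =>
      intro _ t ht hle
      have h1 : (t⁻¹ * 1)⁻¹ ∈ S.P := by simpa using ht.1
      have := S.purity _ hle h1
      rw [this]; exact S.Msub.one_mem
  | cons s l ih =>
      intro hl t ht hle
      have hs : s ∈ S.SD := hl s (by simp)
      have hl' : ∀ y ∈ l, y ∈ S.SD := fun y hy => hl y (by simp [hy])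
      have hmM : l.prod ∈ S.Msub := Submonoid.list_prod_mem _ (fun y hy => Submonoid.subset_closure (hl' y hy))
      have hm'' : l.prod ∈ S.P := S.M_le_P hmM
      -- join j = t ∨ s
      set j := S.vee t s with hj
      have hjΔ : j⁻¹ * S.Δ ∈ S.P := S.vee_le t s S.Δ ht.2 hs.2
      have hjm : j⁻¹ * (s * l.prod) ∈ S.P := by
        refine S.vee_le t s _ ?_ ?_
        · simpa [mul_assoc] using hle
        · simpa using hm''
      have htj : t⁻¹ * j ∈ S.P := S.le_vee_left t s
      have hsj : s⁻¹ * j ∈ S.P := S.le_vee_right t s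
      -- v = s⁻¹ j is simple
      have hvSD : s⁻¹ * j ∈ S.SD := by
        refine ⟨hsj, ?_⟩
        have h1 := S.P.mul_mem hjΔ (S.conj_pos s hs.1)
        have e : (j⁻¹ * S.Δ) * (S.Δ⁻¹ * s * S.Δ) = (s⁻¹ * j)⁻¹ * S.Δ := by group
        rwa [e] at h1
      -- w = t⁻¹ j is simple
      have hwSD : t⁻¹ * j ∈ S.SD := by
        refine ⟨htj, ?_⟩
        have h1 := S.P.mul_mem hjΔ (S.conj_pos t ht.1)
        have e : (j⁻¹ * S.Δ) * (S.Δ⁻¹ * t * S.Δ) = (t⁻¹ * j)⁻¹ * S.Δ := by group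
        rwa [e] at h1
      -- v ≼ l.prod
      have hvl : (s⁻¹ * j)⁻¹ * l.prod ∈ S.P := by
        have e : j⁻¹ * (s * l.prod) = (s⁻¹ * j)⁻¹ * l.prod := by group
        rwa [e] at hjm
      have hvM := ih hl' (s⁻¹ * j) hvSD hvl
      have e2 : t⁻¹ * (s :: l).prod = (t⁻¹ * j) * ((s⁻¹ * j)⁻¹ * l.prod) := by
        rw [List.prod_cons]; group
      rw [e2]
      exact S.Msub.mul_mem (Submonoid.subset_closure hwSD) hvM

end Garside
namespace Garside

variable {G : Type*} [Group G] (S : Garside G)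

lemma mem_M_of_mem_P {a : G} (ha : a ∈ S.P) : a ∈ S.Msub := by
  -- the subgroup of elements of the form Δ^{-k} m
  let T : Subgroup G :=
    { carrier := {g : G | ∃ k : ℕ, S.Δ ^ k * g ∈ S.Msub}
      one_mem' := ⟨0, by simpa using S.Msub.one_mem⟩
      mul_mem' := by
        rintro g h ⟨k, hk⟩ ⟨l, hl⟩
        refine ⟨k + l, ?_⟩
        have e : S.Δ ^ (k + l) * (g * h)
            = (S.Δ ^ l * (S.Δ ^ k * g) * (S.Δ ^ l)⁻¹) * (S.Δ ^ l * h) := by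
          rw [pow_add]; group
        rw [e]
        exact S.Msub.mul_mem (S.tau_inv_pow_mem_M l hk) hl
      inv_mem' := by
        rintro g ⟨k, hk⟩
        obtain ⟨n, hn⟩ := S.M_inv hk
        refine ⟨n, ?_⟩
        have e : S.Δ ^ n * g⁻¹
            = (S.Δ ^ n * (S.Δ ^ k * g)⁻¹) * S.Δ ^ k := by group
        rw [e]
        exact S.Msub.mul_mem hn (S.Msub.pow_mem (Submonoid.subset_closure S.delta_mem_SD) k)
      }
  have hT : ∀ g : G, ∃ k : ℕ, S.Δ ^ k * g ∈ S.Msub := by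
    intro g
    have : g ∈ Subgroup.closure {a : G | a ∈ S.P ∧ a⁻¹ * S.Δ ∈ S.P} := by
      rw [S.simples_generate]; trivial
    have hsub : Subgroup.closure {a : G | a ∈ S.P ∧ a⁻¹ * S.Δ ∈ S.P} ≤ T := by
      rw [Subgroup.closure_le]
      intro y hy
      exact ⟨0, by have hyM : y ∈ S.Msub := Submonoid.subset_closure hy; simpa using hyM⟩
    exact hsub this
  obtain ⟨k, hk⟩ := hT a
  clear_value T
  clear hT
  induction k with
  | zero => simpa using hk
  | succ k ih =>
      refine ih ?_
      obtain ⟨l, hl, hprod⟩ := Submonoid.exists_list_of_mem_closure hk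
      have hpos : S.Δ⁻¹ * (S.Δ ^ (k+1) * a) ∈ S.P := by
        have e : S.Δ⁻¹ * (S.Δ ^ (k+1) * a) = S.Δ ^ k * a := by rw [pow_succ']; group
        rw [e]
        exact S.P.mul_mem (S.P.pow_mem S.delta_mem k) ha
      have := S.simple_div l hl S.Δ S.delta_mem_SD (by rw [hprod]; exact hpos)
      rw [hprod] at this
      have e : S.Δ⁻¹ * (S.Δ ^ (k+1) * a) = S.Δ ^ k * a := by rw [pow_succ']; group
      rwa [e] at this

lemma tau_inv_pos {a : G} (h : a ∈ S.P) : S.Δ * a * S.Δ⁻¹ ∈ S.P :=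
  S.M_le_P (S.tau_inv_mem_M (S.mem_M_of_mem_P h))

/-- Conjugation by arbitrary powers of Δ preserves positivity. -/
lemma zconjP (k : ℤ) {a : G} (h : a ∈ S.P) : S.Δ ^ k * a * (S.Δ ^ k)⁻¹ ∈ S.P := by
  induction k using Int.induction_on with
  | zero => simpa using h
  | succ n ih =>
      have e : S.Δ ^ ((n : ℤ) + 1) * a * (S.Δ ^ ((n : ℤ) + 1))⁻¹
          = S.Δ * (S.Δ ^ (n : ℤ) * a * (S.Δ ^ (n : ℤ))⁻¹) * S.Δ⁻¹ := by
        rw [zpow_add_one]; group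
      rw [e]; exact S.tau_inv_pos ih
  | pred n ih =>
      have e : S.Δ ^ (-(n : ℤ) - 1) * a * (S.Δ ^ (-(n : ℤ) - 1))⁻¹
          = S.Δ⁻¹ * (S.Δ ^ (-(n : ℤ)) * a * (S.Δ ^ (-(n : ℤ)))⁻¹) * S.Δ := by
        rw [zpow_sub_one]; group
      rw [e]; exact S.conj_pos _ ih

lemma zconjP' (k : ℤ) {a : G} (h : a ∈ S.P) : (S.Δ ^ k)⁻¹ * a * S.Δ ^ k ∈ S.P := by
  have := S.zconjP (-k) h
  rwa [zpow_neg, inv_inv] at this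

end Garside
namespace Garside

variable {G : Type*} [Group G] (S : Garside G)

lemma le_mul_left {a b : G} (c : G) (h : S.le a b) : S.le (c * a) (c * b) := by
  have e : (c * a)⁻¹ * (c * b) = a⁻¹ * b := by group
  rw [le, e]; exact h

lemma le_of_mul_left {a b c : G} (h : S.le (c * a) (c * b)) : S.le a b := by
  have e : a⁻¹ * b = (c * a)⁻¹ * (c * b) := by group
  rw [le, e]; exact h

lemma le_mul_zpow {a b : G} (k : ℤ) (h : S.le a b) : S.le (a * S.Δ ^ k) (b * S.Δ ^ k) := by
  have h2 := S.zconjP' k h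
  have e : (a * S.Δ ^ k)⁻¹ * (b * S.Δ ^ k) = (S.Δ ^ k)⁻¹ * (a⁻¹ * b) * S.Δ ^ k := by group
  rw [le, e]; exact h2

lemma le_of_mul_zpow {a b : G} (k : ℤ) (h : S.le (a * S.Δ ^ k) (b * S.Δ ^ k)) : S.le a b := by
  have h2 := S.zconjP k h
  have e : a⁻¹ * b = S.Δ ^ k * ((a * S.Δ ^ k)⁻¹ * (b * S.Δ ^ k)) * (S.Δ ^ k)⁻¹ := by group
  rw [le, e]; exact h2

lemma le_wedge' {a b c : G} (h1 : S.le c a) (h2 : S.le c b) : S.le c (S.wedge a b) :=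
  S.le_wedge a b c h1 h2

lemma wedge_le_left' (a b : G) : S.le (S.wedge a b) a := S.wedge_le_left a b
lemma wedge_le_right' (a b : G) : S.le (S.wedge a b) b := S.wedge_le_right a b

lemma wedge_eq {a b c : G} (h1 : S.le c a) (h2 : S.le c b)
    (h3 : ∀ d, S.le d a → S.le d b → S.le d c) : S.wedge a b = c :=
  S.le_antisymm' (h3 _ (S.wedge_le_left a b) (S.wedge_le_right a b)) (S.le_wedge a b c h1 h2)

lemma mul_wedge (c a b : G) : S.wedge (c * a) (c * b) = c * S.wedge a b := by
  refine S.wedge_eq (S.le_mul_left c (S.wedge_le_left' a b))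
    (S.le_mul_left c (S.wedge_le_right' a b)) ?_
  intro d hd1 hd2
  have h1 : S.le (c⁻¹ * d) a := by
    have := S.le_mul_left c⁻¹ hd1
    rwa [inv_mul_cancel_left] at this
  have h2 : S.le (c⁻¹ * d) b := by
    have := S.le_mul_left c⁻¹ hd2
    rwa [inv_mul_cancel_left] at this
  have := S.le_mul_left c (S.le_wedge' h1 h2)
  rwa [mul_inv_cancel_left] at this

lemma wedge_mul_zpow (k : ℤ) (a b : G) :
    S.wedge (a * S.Δ ^ k) (b * S.Δ ^ k) = S.wedge a b * S.Δ ^ k := by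
  refine S.wedge_eq (S.le_mul_zpow k (S.wedge_le_left' a b))
    (S.le_mul_zpow k (S.wedge_le_right' a b)) ?_
  intro d hd1 hd2
  have h1 : S.le (d * (S.Δ ^ k)⁻¹) a := by
    refine S.le_of_mul_zpow k ?_
    rwa [inv_mul_cancel_right]
  have h2 : S.le (d * (S.Δ ^ k)⁻¹) b := by
    refine S.le_of_mul_zpow k ?_
    rwa [inv_mul_cancel_right]
  have := S.le_mul_zpow k (S.le_wedge' h1 h2)
  rwa [inv_mul_cancel_right] at this

lemma zpow_mem_P {k : ℤ} (h : 0 ≤ k) : S.Δ ^ k ∈ S.P := by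
  obtain ⟨n, rfl⟩ := Int.eq_ofNat_of_zero_le h
  rw [zpow_natCast]
  exact S.P.pow_mem S.delta_mem n

lemma zpow_le_zpow {k l : ℤ} (h : k ≤ l) : S.le (S.Δ ^ k) (S.Δ ^ l) := by
  have h1 : S.Δ ^ (l - k) ∈ S.P := S.zpow_mem_P (by omega)
  have e : (S.Δ ^ k)⁻¹ * S.Δ ^ l = S.Δ ^ (l - k) := by
    rw [← zpow_neg, ← zpow_add]; ring_nf
  rw [le, e]; exact h1

lemma one_le_delta : S.le 1 S.Δ := by
  rw [le]; simpa using S.delta_mem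

lemma sup_le_iff {x : G} {q : ℤ} : S.sup x ≤ q ↔ S.le x (S.Δ ^ q) := by
  constructor
  · intro h
    exact S.le_trans' (S.le_sup x) (S.zpow_le_zpow h)
  · exact S.sup_min x q

lemma le_inf_iff {x : G} {p : ℤ} : p ≤ S.inf x ↔ S.le (S.Δ ^ p) x := by
  constructor
  · intro h
    exact S.le_trans' (S.zpow_le_zpow h) (S.inf_le x)
  · exact S.inf_max x p

lemma inf_inv (x : G) : S.inf x⁻¹ = -S.sup x := by
  have h1 : -S.sup x ≤ S.inf x⁻¹ := by
    rw [le_inf_iff]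
    have h2 := S.le_sup x
    have e : (S.Δ ^ (-S.sup x))⁻¹ * x⁻¹
        = S.Δ ^ S.sup x * (x⁻¹ * S.Δ ^ S.sup x) * (S.Δ ^ S.sup x)⁻¹ := by group
    rw [le, e]; exact S.zconjP _ h2
  have h2 : S.sup x ≤ -S.inf x⁻¹ := by
    rw [sup_le_iff]
    have h3 := S.inf_le x⁻¹
    have e : x⁻¹ * S.Δ ^ (-S.inf x⁻¹)
        = S.Δ ^ S.inf x⁻¹ * ((S.Δ ^ S.inf x⁻¹)⁻¹ * x⁻¹) * (S.Δ ^ S.inf x⁻¹)⁻¹ := by group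
    rw [le, e]; exact S.zconjP _ h3
  omega

end Garside
namespace Garside

variable {G : Type*} [Group G] (S : Garside G)

lemma le_sup' (x : G) : S.le x (S.Δ ^ S.sup x) := S.le_sup x
lemma inf_le' (x : G) : S.le (S.Δ ^ S.inf x) x := S.inf_le x

lemma le_delta_zpow {k : ℤ} (h : 1 ≤ k) : S.le S.Δ (S.Δ ^ k) := by
  have := S.zpow_le_zpow h
  rwa [zpow_one] at this

end Garside
open Garside in
theorem statement3 {G : Type*} [Group G] (S : Garside G) (x : G) (h : 1 < S.len x) :
    (¬ S.le (S.phi x * S.iota x) S.Δ → S.sl x = S.dec (S.cyc x)) ∧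
    (¬ S.le S.Δ (S.phi x * S.iota x) → S.sl x = S.cyc (S.dec x)) := by
  rw [len] at h
  set p := S.inf x with hp0
  set q := S.sup x with hq0
  have hpq : p + 2 ≤ q := by omega
  set u := x * S.Δ ^ (-p) with hu0
  set y := S.wedge (S.Δ ^ (q - 1)) x with hy0
  set ι := S.wedge u S.Δ with hι0
  have hiota : S.iota x = ι := by rw [iota, ← hp0, ← hu0, hι0]
  have hphi : S.phi x = y⁻¹ * x := by rw [phi, ← hq0, ← hy0]
  -- basic facts
  have hyd : S.le y (S.Δ ^ (q - 1)) := by rw [hy0]; exact S.wedge_le_left' _ _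
  have hyx : S.le y x := by rw [hy0]; exact S.wedge_le_right' _ _
  have hφP : y⁻¹ * x ∈ S.P := hyx
  have hιu : S.le ι u := by rw [hι0]; exact S.wedge_le_left' _ _
  have hιΔ : S.le ι S.Δ := by rw [hι0]; exact S.wedge_le_right' _ _
  have hyΔq : y * S.Δ = S.wedge (S.Δ ^ q) (x * S.Δ) := by
    have e1 : q - 1 + 1 = q := by ring
    have e : S.Δ ^ (q - 1) * S.Δ = S.Δ ^ q := by rw [← zpow_add_one, e1]
    have h2 := S.wedge_mul_zpow 1 (S.Δ ^ (q - 1)) x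
    rw [zpow_one] at h2
    rw [hy0, ← e]
    exact h2.symm
  have hxxd : S.le x (x * S.Δ) := by
    rw [le, inv_mul_cancel_left]; exact S.delta_mem
  have hxq : S.le x (S.Δ ^ q) := by rw [hq0]; exact S.le_sup' x
  have hxyΔ : S.le x (y * S.Δ) := by
    rw [hyΔq]; exact S.le_wedge' hxq hxxd
  have hφΔ : S.le (y⁻¹ * x) S.Δ := by
    have e : (y⁻¹ * x)⁻¹ * S.Δ = x⁻¹ * (y * S.Δ) := by group
    rw [le, e]; exact hxyΔ
  have hΔφΔ : S.le S.Δ ((y⁻¹ * x) * S.Δ) := by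
    have h2 := S.conj_pos _ hφP
    have e : S.Δ⁻¹ * ((y⁻¹ * x) * S.Δ) = S.Δ⁻¹ * (y⁻¹ * x) * S.Δ := by group
    rw [le, e]; exact h2
  have hiotainv : S.iota x⁻¹ = (y⁻¹ * x)⁻¹ * S.Δ := by
    rw [iota, S.inf_inv, ← hq0, neg_neg]
    have e3 := S.mul_wedge x⁻¹ (S.Δ ^ q) (x * S.Δ)
    rw [inv_mul_cancel_left] at e3
    rw [e3, ← hyΔq]; group
  set 𝔭 := S.wedge ι ((y⁻¹ * x)⁻¹ * S.Δ) with hpp0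
  have hppx : S.pp x = 𝔭 := by rw [pp, hiota, hiotainv, hpp0]
  have h𝔭ι : S.le 𝔭 ι := by rw [hpp0]; exact S.wedge_le_left' _ _
  have h𝔭φ : S.le 𝔭 ((y⁻¹ * x)⁻¹ * S.Δ) := by rw [hpp0]; exact S.wedge_le_right' _ _
  have hφ𝔭Δ : S.le ((y⁻¹ * x) * 𝔭) S.Δ := by
    have e : ((y⁻¹ * x) * 𝔭)⁻¹ * S.Δ = 𝔭⁻¹ * ((y⁻¹ * x)⁻¹ * S.Δ) := by group
    rw [le, e]; exact h𝔭φ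
  have hΔpx : S.le (S.Δ ^ p) x := by rw [hp0]; exact S.inf_le' x
  have hx𝔭 : x * 𝔭 = S.wedge (x * ι) (S.Δ ^ q) := by
    rw [hpp0, ← S.mul_wedge]
    rw [show x * ((y⁻¹ * x)⁻¹ * S.Δ) = y * S.Δ from by group, hyΔq]
    refine S.le_antisymm' ?_ ?_
    · refine S.le_wedge' (S.wedge_le_left' _ _) ?_
      exact S.le_trans' (S.wedge_le_right' _ _) (S.wedge_le_left' _ _)
    · refine S.le_wedge' (S.wedge_le_left' _ _) ?_
      refine S.le_wedge' (S.wedge_le_right' _ _) ?_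
      exact S.le_trans' (S.wedge_le_left' _ _) (S.le_mul_left x hιΔ)
  have hF1 : S.le x (ι * S.Δ ^ (q - 1)) := by
    have e := S.wedge_mul_zpow (q - 1) u S.Δ
    rw [hι0, ← e]
    refine S.le_wedge' ?_ ?_
    · rw [le, hu0]
      have e2 : x⁻¹ * (x * S.Δ ^ (-p) * S.Δ ^ (q - 1)) = S.Δ ^ (-p + (q - 1)) := by
        rw [zpow_add]; group
      rw [e2]
      exact S.zpow_mem_P (by omega)
    · have e3 : S.Δ * S.Δ ^ (q - 1) = S.Δ ^ q := by
        rw [← zpow_one_add, show (1 : ℤ) + (q - 1) = q from by ring]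
      rw [e3]; exact hxq
  have hF2 : S.le y (ι * S.Δ ^ (q - 2)) := by
    have e := S.wedge_mul_zpow (q - 2) u S.Δ
    rw [hι0, ← e]
    refine S.le_wedge' ?_ ?_
    · rw [le, hu0]
      have e2 : y⁻¹ * (x * S.Δ ^ (-p) * S.Δ ^ (q - 2))
          = (y⁻¹ * x) * S.Δ ^ (-p + (q - 2)) := by
        rw [zpow_add]; group
      rw [e2]
      exact S.P.mul_mem hφP (S.zpow_mem_P (by omega))
    · have e3 : S.Δ * S.Δ ^ (q - 2) = S.Δ ^ (q - 1) := by
        rw [← zpow_one_add, show (1 : ℤ) + (q - 2) = q - 1 from by ring]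
      rw [e3]; exact hyd
  have hιq : S.le (ι * S.Δ ^ (q - 1)) (S.Δ ^ q) := by
    have h2 := S.le_mul_zpow (q - 1) hιΔ
    have e : S.Δ * S.Δ ^ (q - 1) = S.Δ ^ q := by
      rw [← zpow_one_add, show (1 : ℤ) + (q - 1) = q from by ring]
    rwa [e] at h2
  have hcyc : S.cyc x = ι⁻¹ * x * ι := by rw [cyc, hiota]
  constructor
  · -- Case 1
    intro h1
    have hsupc_le : S.sup (S.cyc x) ≤ q := by
      rw [S.sup_le_iff, hcyc]
      have s1 : x⁻¹ * (ι * S.Δ ^ (q - 1)) ∈ S.P := hF1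
      have s2 := S.conj_pos _ s1
      have s3 : S.le S.Δ (x⁻¹ * (ι * S.Δ ^ q)) := by
        have e : S.Δ⁻¹ * (x⁻¹ * (ι * S.Δ ^ q))
            = S.Δ⁻¹ * (x⁻¹ * (ι * S.Δ ^ (q - 1))) * S.Δ := by
          rw [show (q : ℤ) = (q - 1) + 1 from by ring, zpow_add_one]; group
        rw [le, e]; exact s2
      have s4 : S.le ι (x⁻¹ * (ι * S.Δ ^ q)) := S.le_trans' hιΔ s3
      have e2 : (ι⁻¹ * x * ι)⁻¹ * S.Δ ^ q = ι⁻¹ * (x⁻¹ * (ι * S.Δ ^ q)) := by group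
      rw [le, e2]; exact s4
    have hsupc_ge : q ≤ S.sup (S.cyc x) := by
      by_contra hcon
      push_neg at hcon
      have hc : S.le (S.cyc x) (S.Δ ^ (q - 1)) :=
        S.le_trans' (S.le_sup' (S.cyc x)) (S.zpow_le_zpow (by omega))
      rw [hcyc] at hc
      apply h1
      rw [hphi, hiota]
      have t1 : S.le (x * ι) (ι * S.Δ ^ (q - 1)) := by
        have e : (x * ι)⁻¹ * (ι * S.Δ ^ (q - 1)) = (ι⁻¹ * x * ι)⁻¹ * S.Δ ^ (q - 1) := by group
        rw [le, e]; exact hc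
      have t3 : S.le (x * ι) (S.Δ ^ q) := S.le_trans' t1 hιq
      have t4 : S.le (x * ι) (x * S.Δ) := S.le_mul_left x hιΔ
      have t5 : S.le (x * ι) (y * S.Δ) := by rw [hyΔq]; exact S.le_wedge' t3 t4
      have e : ((y⁻¹ * x) * ι)⁻¹ * S.Δ = (x * ι)⁻¹ * (y * S.Δ) := by group
      rw [le, e]; exact t5
    have hsupc : S.sup (S.cyc x) = q := le_antisymm hsupc_le hsupc_ge
    have hkey : S.wedge (ι * S.Δ ^ (q - 1)) (x * ι) = x * 𝔭 := by
      refine S.wedge_eq ?_ (S.le_mul_left x h𝔭ι) ?_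
      · have u1 : S.le (x * 𝔭) (y * S.Δ) := by
          have e : (x * 𝔭)⁻¹ * (y * S.Δ) = ((y⁻¹ * x) * 𝔭)⁻¹ * S.Δ := by group
          rw [le, e]; exact hφ𝔭Δ
        have u2 : S.le (y * S.Δ) (ι * S.Δ ^ (q - 1)) := by
          have h2 := S.le_mul_zpow 1 hF2
          rw [zpow_one] at h2
          have e : ι * S.Δ ^ (q - 2) * S.Δ = ι * S.Δ ^ (q - 1) := by
            rw [show (q - 1 : ℤ) = (q - 2) + 1 from by ring, zpow_add_one]; group
          rwa [e] at h2
        exact S.le_trans' u1 u2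
      · intro d hd1 hd2
        rw [hx𝔭]
        exact S.le_wedge' hd2 (S.le_trans' hd1 hιq)
    have hwedgecyc : S.wedge (S.Δ ^ (q - 1)) (S.cyc x) = ι⁻¹ * (x * 𝔭) := by
      rw [hcyc]
      rw [show (S.Δ ^ (q - 1) : G) = ι⁻¹ * (ι * S.Δ ^ (q - 1)) from by group,
          show (ι⁻¹ * x * ι : G) = ι⁻¹ * (x * ι) from by group,
          S.mul_wedge, hkey]
    have hphic : S.phi (S.cyc x) = 𝔭⁻¹ * ι := by
      rw [phi, hsupc, hwedgecyc, hcyc]; group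
    rw [sl, hppx, dec, hphic, hcyc]; group
  · -- Case 2
    intro h2
    have hdec : S.dec x = (y⁻¹ * x) * y := by rw [dec, hphi]; group
    have hΔpy : S.le (S.Δ ^ p) y := by
      rw [hy0]
      exact S.le_wedge' (S.zpow_le_zpow (by omega)) hΔpx
    have hinfd_ge : p ≤ S.inf (S.dec x) := by
      rw [S.le_inf_iff, hdec, le]
      have e : (S.Δ ^ p)⁻¹ * ((y⁻¹ * x) * y)
          = ((S.Δ ^ p)⁻¹ * (y⁻¹ * x) * S.Δ ^ p) * ((S.Δ ^ p)⁻¹ * y) := by group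
      rw [e]; exact S.P.mul_mem (S.zconjP' p hφP) hΔpy
    have hinfd_le : S.inf (S.dec x) ≤ p := by
      by_contra hcon
      push_neg at hcon
      have hA : S.le (S.Δ ^ (p + 1)) (S.dec x) :=
        S.le_trans' (S.zpow_le_zpow (by omega)) (S.inf_le' _)
      rw [hdec] at hA
      apply h2
      rw [hphi, hiota, hι0, ← S.mul_wedge]
      refine S.le_wedge' ?_ hΔφΔ
      rw [le, hu0]
      have hA' : (S.Δ ^ (p + 1))⁻¹ * ((y⁻¹ * x) * y) ∈ S.P := hA
      have e : S.Δ⁻¹ * ((y⁻¹ * x) * (x * S.Δ ^ (-p)))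
          = S.Δ ^ p * (((S.Δ ^ (p + 1))⁻¹ * ((y⁻¹ * x) * y)) * (y⁻¹ * x)) * (S.Δ ^ p)⁻¹ := by
        rw [zpow_add_one]; group
      rw [e]; exact S.zconjP p (S.P.mul_mem hA' hφP)
    have hinfd : S.inf (S.dec x) = p := le_antisymm hinfd_le hinfd_ge
    set m := S.wedge ((y⁻¹ * x) * u) S.Δ with hm0
    have hmΔ : S.le m S.Δ := by rw [hm0]; exact S.wedge_le_right' _ _
    have hiotadec : S.iota (S.dec x) = m := by
      rw [iota, hinfd, hdec]
      rw [show ((y⁻¹ * x) * y * S.Δ ^ (-p) : G) = (y⁻¹ * x) * (y * S.Δ ^ (-p)) from by group]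
      have e1 : y * S.Δ ^ (-p) = S.wedge (S.Δ ^ (q - 1) * S.Δ ^ (-p)) (x * S.Δ ^ (-p)) := by
        rw [hy0, S.wedge_mul_zpow]
      rw [e1, ← hu0, ← S.mul_wedge]
      refine S.le_antisymm' ?_ ?_
      · rw [hm0]
        refine S.le_wedge' ?_ (S.wedge_le_right' _ _)
        exact S.le_trans' (S.wedge_le_left' _ _) (S.wedge_le_right' _ _)
      · refine S.le_wedge' ?_ hmΔ
        refine S.le_wedge' ?_ (by rw [hm0]; exact S.wedge_le_left' _ _)
        -- m ≼ (y⁻¹x) * (Δ^{q-1} * Δ^{-p})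
        have w1 : S.le S.Δ (S.Δ ^ (q - 1 - p)) := S.le_delta_zpow (by omega)
        have w2 : S.le (S.Δ ^ (q - 1 - p)) ((y⁻¹ * x) * (S.Δ ^ (q - 1) * S.Δ ^ (-p))) := by
          have e : (S.Δ ^ (q - 1 - p))⁻¹ * ((y⁻¹ * x) * (S.Δ ^ (q - 1) * S.Δ ^ (-p)))
              = (S.Δ ^ (q - 1 - p))⁻¹ * (y⁻¹ * x) * S.Δ ^ (q - 1 - p) := by
            rw [show (q - 1 - p : ℤ) = (q - 1) + (-p) from by ring, zpow_add]; group
          rw [le, e]; exact S.zconjP' _ hφP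
        exact S.le_trans' hmΔ (S.le_trans' w1 w2)
    have h𝔭m : (y⁻¹ * x) * 𝔭 = m := by
      rw [hpp0, hι0, hm0, ← S.mul_wedge, mul_inv_cancel_left, ← S.mul_wedge]
      refine S.le_antisymm' ?_ ?_
      · refine S.le_wedge' ?_ (S.wedge_le_right' _ _)
        exact S.le_trans' (S.wedge_le_left' _ _) (S.wedge_le_left' _ _)
      · refine S.le_wedge' ?_ (S.wedge_le_right' _ _)
        refine S.le_wedge' (S.wedge_le_left' _ _) ?_
        exact S.le_trans' (S.wedge_le_right' _ _) hΔφΔ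
    rw [sl, hppx, cyc, hiotadec, ← h𝔭m, dec, hphi]; group

end GarsidePaper
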